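/- Let ω be a nondecreasing positive weight. Then ω has the lower regularity property (∃ α > 0, C > 0 with ω(N) ≥ C(N/k)^α ω(k) for N ≥ k) if and only if the lower dilation index i_ω = sup_{M≥2} ln(φ_ω(M))/ln(M) is strictly positive. Moreover, i_ω = sup{α > 0 : ω ∈ LRP(α)}. -/

import Mathlib

open scoped ENNReal

/-- φ_ω(M) = inf_{k≥1} ω(Mk)/ω(k). -/
noncomputable def phiDil (ω : ℕ → ℝ) (M : ℕ) : ℝ :=
  sInf {r : ℝ | ∃ k, 1 ≤ k ∧ r = ω (M * k) / ω k}

/-- The lower dilation index i_ω = sup_{M ≥ 2} ln(φ_ω(M))/ln(M), valued in [0,∞]. -/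
noncomputable def lowerIndex (ω : ℕ → ℝ) : ℝ≥0∞ :=
  ⨆ M : {M : ℕ // 2 ≤ M}, ENNReal.ofReal (Real.log (phiDil ω M) / Real.log M)

/-- ω ∈ LRP(α): there is C > 0 with ω(N) ≥ C (N/k)^α ω(k) for all N ≥ k ≥ 1. -/
def LRP (ω : ℕ → ℝ) (α : ℝ) : Prop :=
  ∃ C : ℝ, 0 < C ∧ ∀ N k : ℕ, 1 ≤ k → k ≤ N → C * ((N : ℝ) / k) ^ α * ω k ≤ ω N

lemma phiSet_nonempty (ω : ℕ → ℝ) (M : ℕ) :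
    {r : ℝ | ∃ k, 1 ≤ k ∧ r = ω (M * k) / ω k}.Nonempty :=
  ⟨ω (M * 1) / ω 1, 1, le_rfl, rfl⟩

lemma phiSet_lb (ω : ℕ → ℝ) (hpos : ∀ n, 1 ≤ n → 0 < ω n)
    (hmono : ∀ m n, 1 ≤ m → m ≤ n → ω m ≤ ω n) {M : ℕ} (hM : 1 ≤ M) :
    ∀ r ∈ {r : ℝ | ∃ k, 1 ≤ k ∧ r = ω (M * k) / ω k}, (1:ℝ) ≤ r := by
  rintro r ⟨k, hk, rfl⟩
  have hk' : 1 ≤ M * k := Nat.one_le_iff_ne_zero.2 (Nat.mul_ne_zero (by omega) (by omega))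
  have := hmono k (M * k) hk (Nat.le_mul_of_pos_left k (by omega))
  exact (one_le_div (hpos k hk)).2 this

lemma one_le_phiDil (ω : ℕ → ℝ) (hpos : ∀ n, 1 ≤ n → 0 < ω n)
    (hmono : ∀ m n, 1 ≤ m → m ≤ n → ω m ≤ ω n) {M : ℕ} (hM : 1 ≤ M) :
    1 ≤ phiDil ω M :=
  le_csInf (phiSet_nonempty ω M) (phiSet_lb ω hpos hmono hM)

lemma phiDil_bddBelow (ω : ℕ → ℝ) (hpos : ∀ n, 1 ≤ n → 0 < ω n)
    (hmono : ∀ m n, 1 ≤ m → m ≤ n → ω m ≤ ω n) {M : ℕ} (hM : 1 ≤ M) :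
    BddBelow {r : ℝ | ∃ k, 1 ≤ k ∧ r = ω (M * k) / ω k} :=
  ⟨1, phiSet_lb ω hpos hmono hM⟩

/-- Key step: if φ_ω(M) > 1 then LRP holds with α = log φ(M) / log M. -/
lemma lrp_of_phi (ω : ℕ → ℝ) (hpos : ∀ n, 1 ≤ n → 0 < ω n)
    (hmono : ∀ m n, 1 ≤ m → m ≤ n → ω m ≤ ω n) {M : ℕ} (hM : 2 ≤ M)
    (hq : 1 < phiDil ω M) :
    LRP ω (Real.log (phiDil ω M) / Real.log M) := by
  set q := phiDil ω M with hqdef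
  have hq0 : (0:ℝ) < q := lt_trans one_pos hq
  have hM1 : (1:ℝ) < (M:ℝ) := by exact_mod_cast (by omega : 1 < M)
  have hM0 : (0:ℝ) < (M:ℝ) := lt_trans one_pos hM1
  have hlogM : 0 < Real.log M := Real.log_pos hM1
  set α := Real.log q / Real.log M with hαdef
  have hα : 0 < α := div_pos (Real.log_pos hq) hlogM
  -- M^α = q
  have hMα : (M:ℝ) ^ α = q := by
    rw [Real.rpow_def_of_pos hM0]
    rw [show Real.log M * α = Real.log q by rw [hαdef]; field_simp [hlogM.ne']]
    exact Real.exp_log hq0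
  -- q ≤ ω (M*k) / ω k for all k ≥ 1
  have hstep : ∀ k, 1 ≤ k → q * ω k ≤ ω (M * k) := by
    intro k hk
    have h1 : q ≤ ω (M * k) / ω k :=
      csInf_le (phiDil_bddBelow ω hpos hmono (by omega)) ⟨k, hk, rfl⟩
    have := hpos k hk
    calc q * ω k ≤ (ω (M * k) / ω k) * ω k := by nlinarith
    _ = ω (M * k) := by field_simp
  -- iterate
  have hiter : ∀ j k, 1 ≤ k → q ^ j * ω k ≤ ω (M ^ j * k) := by
    intro j
    induction j with
    | zero => intro k hk; simp
    | succ j ih =>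
      intro k hk
      have hk' : 1 ≤ M ^ j * k := Nat.mul_pos (Nat.pow_pos (by omega)) hk
      have h1 : q * ω (M ^ j * k) ≤ ω (M * (M ^ j * k)) := hstep _ hk'
      have h2 : q ^ j * ω k ≤ ω (M ^ j * k) := ih k hk
      have : M ^ (j + 1) * k = M * (M ^ j * k) := by ring
      rw [this, pow_succ]
      nlinarith
  -- main estimate
  refine ⟨1 / q, by positivity, fun N k hk hkN => ?_⟩
  set j := Nat.log M (N / k) with hjdef
  have hk0 : 0 < k := hk
  have hdiv1 : 1 ≤ N / k := (Nat.one_le_div_iff hk0).2 hkN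
  have hj1 : M ^ j * k ≤ N := by
    have h1 : M ^ j ≤ N / k := Nat.pow_log_le_self M (by omega)
    calc M ^ j * k ≤ (N / k) * k := Nat.mul_le_mul_right k h1
    _ ≤ N := Nat.div_mul_le_self N k
  have hj2 : N < M ^ (j + 1) * k := by
    have h1 : N / k < M ^ (j + 1) := Nat.lt_pow_succ_log_self (by omega) (N / k)
    exact (Nat.div_lt_iff_lt_mul hk0).1 h1
  have hk0' : (0:ℝ) < (k:ℝ) := by exact_mod_cast hk0
  have hNk : ((N:ℝ) / k) < (M:ℝ) ^ (j + 1) := by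
    rw [div_lt_iff₀ hk0']
    calc (N:ℝ) < ((M ^ (j + 1) * k : ℕ) : ℝ) := by exact_mod_cast hj2
    _ = (M:ℝ) ^ (j + 1) * k := by push_cast; ring
  have hpow : ((N:ℝ) / k) ^ α ≤ q ^ (j + 1) := by
    have h1 : ((N:ℝ) / k) ^ α ≤ ((M:ℝ) ^ (j + 1)) ^ α :=
      Real.rpow_le_rpow (by positivity) hNk.le hα.le
    have h2 : ((M:ℝ) ^ (j + 1)) ^ α = q ^ (j + 1) := by
      rw [← hMα, ← Real.rpow_natCast ((M:ℝ) ^ α) (j + 1), ← Real.rpow_natCast (M:ℝ) (j + 1),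
        ← Real.rpow_mul hM0.le, ← Real.rpow_mul hM0.le, mul_comm]
    linarith
  have hk'' : 1 ≤ M ^ j * k := Nat.mul_pos (Nat.pow_pos (by omega)) hk0
  have hmain : q ^ j * ω k ≤ ω N :=
    le_trans (hiter j k hk) (hmono _ _ hk'' hj1)
  have hωk : 0 < ω k := hpos k hk
  have : (1 / q) * ((N:ℝ) / k) ^ α * ω k ≤ (1 / q) * q ^ (j + 1) * ω k := by
    have := mul_le_mul_of_nonneg_right hpow hωk.le
    nlinarith [one_div_pos.2 hq0]
  calc (1 / q) * ((N:ℝ) / k) ^ α * ω k ≤ (1 / q) * q ^ (j + 1) * ω k := this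
  _ = q ^ j * ω k := by rw [pow_succ]; field_simp
  _ ≤ ω N := hmain

/-- If LRP holds for α > 0 then ofReal α ≤ lowerIndex. -/
lemma index_ge (ω : ℕ → ℝ) (hpos : ∀ n, 1 ≤ n → 0 < ω n)
    (hmono : ∀ m n, 1 ≤ m → m ≤ n → ω m ≤ ω n) {α : ℝ} (hα : 0 < α)
    (h : LRP ω α) : ENNReal.ofReal α ≤ lowerIndex ω := by
  obtain ⟨C, hC, hL⟩ := h
  -- step: ∀ ε > 0, ofReal (α - ε) ≤ lowerIndex ω
  have step : ∀ ε : ℝ, 0 < ε → ENNReal.ofReal (α - ε) ≤ lowerIndex ω := by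
    intro ε hε
    set M : ℕ := max 2 ⌈Real.exp ((-Real.log C) / ε)⌉₊ with hMdef
    have hM2 : 2 ≤ M := le_max_left _ _
    have hM1 : (1:ℝ) < (M:ℝ) := by exact_mod_cast (by omega : 1 < M)
    have hM0 : (0:ℝ) < (M:ℝ) := lt_trans one_pos hM1
    have hlogM : 0 < Real.log M := Real.log_pos hM1
    have hMe : Real.exp ((-Real.log C) / ε) ≤ (M:ℝ) := by
      calc Real.exp ((-Real.log C) / ε) ≤ (⌈Real.exp ((-Real.log C) / ε)⌉₊ : ℝ) :=
        Nat.le_ceil _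
      _ ≤ (M:ℝ) := by exact_mod_cast le_max_right _ _
    have hlogC : -ε * Real.log M ≤ Real.log C := by
      have h1 : (-Real.log C) / ε ≤ Real.log M := by
        calc (-Real.log C) / ε = Real.log (Real.exp ((-Real.log C) / ε)) :=
          (Real.log_exp _).symm
        _ ≤ Real.log M := Real.log_le_log (Real.exp_pos _) hMe
      rw [div_le_iff₀ hε] at h1
      nlinarith
    -- φ(M) ≥ C * M^α
    have hφ : C * (M:ℝ) ^ α ≤ phiDil ω M := by
      apply le_csInf (phiSet_nonempty ω M)
      rintro r ⟨k, hk, rfl⟩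
      have hk0 : (0:ℝ) < (k:ℝ) := by exact_mod_cast hk
      have hωk : 0 < ω k := hpos k hk
      have h1 : C * (((M * k : ℕ):ℝ) / k) ^ α * ω k ≤ ω (M * k) :=
        hL (M * k) k hk (Nat.le_mul_of_pos_left k (by omega))
      have h2 : ((M * k : ℕ):ℝ) / k = (M:ℝ) := by push_cast; field_simp
      rw [h2] at h1
      rw [le_div_iff₀ hωk]
      exact h1
    have hCM : (0:ℝ) < C * (M:ℝ) ^ α := by positivity
    have hlogφ : Real.log C + α * Real.log M ≤ Real.log (phiDil ω M) := by
      have e : Real.log (C * (M:ℝ) ^ α) = Real.log C + α * Real.log M := by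
        rw [Real.log_mul (ne_of_gt hC) (by positivity), Real.log_rpow hM0]
      rw [← e]
      exact Real.log_le_log hCM hφ
    have hratio : α - ε ≤ Real.log (phiDil ω M) / Real.log M := by
      rw [le_div_iff₀ hlogM]
      nlinarith
    refine le_trans (ENNReal.ofReal_le_ofReal hratio) ?_
    exact le_iSup (fun M : {M : ℕ // 2 ≤ M} =>
      ENNReal.ofReal (Real.log (phiDil ω (M:ℕ)) / Real.log ((M:ℕ):ℝ))) ⟨M, hM2⟩
  by_contra hcon
  push_neg at hcon
  have hne : lowerIndex ω ≠ ⊤ := ne_top_of_lt (lt_of_lt_of_le hcon le_top)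
  have htr : (lowerIndex ω).toReal < α := by
    have := ENNReal.toReal_lt_toReal hne ((ENNReal.ofReal_ne_top)) |>.2 hcon
    rwa [ENNReal.toReal_ofReal hα.le] at this
  set ε := (α - (lowerIndex ω).toReal) / 2 with hεdef
  have hε : 0 < ε := by simp [hεdef]; linarith
  have h1 := step ε hε
  have h2 : lowerIndex ω < ENNReal.ofReal (α - ε) := by
    rw [ENNReal.lt_ofReal_iff_toReal_lt hne]
    simp only [hεdef]; linarith
  exact absurd h1 (not_le.2 h2)

/-- ω has the LRP iff i_ω > 0; moreover i_ω = sup{α > 0 : ω ∈ LRP(α)}. -/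
theorem stmt9 (ω : ℕ → ℝ) (hpos : ∀ n, 1 ≤ n → 0 < ω n)
    (hmono : ∀ m n, 1 ≤ m → m ≤ n → ω m ≤ ω n) :
    ((∃ α : ℝ, 0 < α ∧ LRP ω α) ↔ 0 < lowerIndex ω) ∧
      lowerIndex ω = ⨆ α : {a : ℝ // 0 < a ∧ LRP ω a}, ENNReal.ofReal α := by
  -- helper: from a term M with positive ratio, get LRP at that ratio
  have fromM : ∀ M : ℕ, 2 ≤ M →
      0 < Real.log (phiDil ω M) / Real.log M →
      0 < Real.log (phiDil ω M) / Real.log M ∧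
        LRP ω (Real.log (phiDil ω M) / Real.log M) := by
    intro M hM ht
    have hM1 : (1:ℝ) < (M:ℝ) := by exact_mod_cast (by omega : 1 < M)
    have hlogM : 0 < Real.log M := Real.log_pos hM1
    have hlogφ : 0 < Real.log (phiDil ω M) := by
      have := mul_pos ht hlogM
      rwa [div_mul_cancel₀ _ (ne_of_gt hlogM)] at this
    have hφ1 : 1 < phiDil ω M := by
      by_contra hcon
      push_neg at hcon
      have h0 : 0 < phiDil ω M :=
        lt_of_lt_of_le one_pos (one_le_phiDil ω hpos hmono (by omega))
      have : Real.log (phiDil ω M) ≤ 0 := Real.log_nonpos (le_of_lt h0) hcon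
      linarith
    exact ⟨ht, lrp_of_phi ω hpos hmono hM hφ1⟩
  constructor
  · constructor
    · rintro ⟨α, hα, hL⟩
      calc (0:ℝ≥0∞) < ENNReal.ofReal α := ENNReal.ofReal_pos.2 hα
      _ ≤ lowerIndex ω := index_ge ω hpos hmono hα hL
    · intro h
      rw [lowerIndex, lt_iSup_iff] at h
      obtain ⟨⟨M, hM⟩, hMpos⟩ := h
      have ht : 0 < Real.log (phiDil ω M) / Real.log M := ENNReal.ofReal_pos.1 hMpos
      obtain ⟨h1, h2⟩ := fromM M hM ht
      exact ⟨_, h1, h2⟩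
  · apply le_antisymm
    · apply iSup_le
      rintro ⟨M, hM⟩
      by_cases ht : 0 < Real.log (phiDil ω M) / Real.log M
      · obtain ⟨h1, h2⟩ := fromM M hM ht
        exact le_iSup (fun α : {a : ℝ // 0 < a ∧ LRP ω a} =>
          ENNReal.ofReal (α:ℝ)) ⟨_, h1, h2⟩
      · push_neg at ht
        simp [ENNReal.ofReal_eq_zero.2 ht]
    · apply iSup_le
      rintro ⟨α, hα, hL⟩
      exact index_ge ω hpos hmono hα hL
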